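/- Let α be a positive odd integer and p ≥ α + 3 a prime. Then Σ_{l=1}^{p-1} 1/l^α ≡ 0 (mod p²), where the sum is taken in ℤ/p²ℤ using inverses of the units l. -/

import Mathlib

lemma nilp_add_pow {R : Type*} [CommRing R] (t a : R) (ht : t * t = 0) :
    ∀ n : ℕ, (a + t) ^ (n + 1) = a ^ (n + 1) + (n + 1 : ℕ) * a ^ n * t := by
  intro n
  induction n with
  | zero => push_cast; ring
  | succ m ih =>
    have h : (a + t) ^ (m + 1 + 1) = (a + t) ^ (m + 1) * (a + t) := by ring
    rw [h, ih]
    push_cast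
    linear_combination ((m : R) + 1) * a ^ m * ht

theorem stmt7 (p α : ℕ) (hp : p.Prime) (hα : 0 < α) (hodd : Odd α) (hpα : α + 3 ≤ p) :
    (∑ l ∈ Finset.Ico 1 p, ((l : ZMod (p ^ 2)) ^ α)⁻¹) = 0 := by
  obtain ⟨k, rfl⟩ := hodd
  haveI : Fact p.Prime := ⟨hp⟩
  haveI : NeZero (p ^ 2) := ⟨pow_ne_zero 2 hp.pos.ne'⟩
  set q := p ^ 2 with hq
  have htt : (p : ZMod q) * (p : ZMod q) = 0 := by
    have h0 : ((p ^ 2 : ℕ) : ZMod q) = 0 := by rw [← hq]; exact ZMod.natCast_self q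
    push_cast at h0
    linear_combination h0
  -- units
  have hunit : ∀ l : ℕ, 1 ≤ l → l < p → IsUnit ((l : ZMod q)) := by
    intro l h1 h2
    rw [ZMod.isUnit_iff_coprime, hq]
    exact Nat.Coprime.pow_right 2 ((hp.coprime_iff_not_dvd.mpr
      (Nat.not_dvd_of_pos_of_lt (by omega) h2)).symm)
  -- per-term pairing identity
  have key : ∀ l : ℕ, 1 ≤ l → l < p →
      ((l : ZMod q) ^ (2*k+1))⁻¹ + (((p - l : ℕ) : ZMod q) ^ (2*k+1))⁻¹
        = -(((2*k+1 : ℕ) : ZMod q)) * (p : ZMod q) * ((l : ZMod q) ^ (2*k+2))⁻¹ := by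
    intro l h1 h2
    set x : ZMod q := (l : ZMod q) with hxdef
    have hx : IsUnit x := hunit l h1 h2
    set y : ZMod q := ((p - l : ℕ) : ZMod q) with hydef
    have hy : IsUnit y := hunit (p - l) (by omega) (by omega)
    have hycast : y = -x + (p : ZMod q) := by
      rw [hydef, Nat.cast_sub h2.le]; ring
    have h1y : y ^ (2*k+1) = -x ^ (2*k+1) + ((2*k+1 : ℕ) : ZMod q) * x ^ (2*k) * (p : ZMod q) := by
      rw [hycast, nilp_add_pow (p : ZMod q) (-x) htt (2*k),
        Odd.neg_pow ⟨k, rfl⟩, Even.neg_pow (even_two_mul k)]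
    have e1 : x ^ (2*k+1) * (x ^ (2*k+1))⁻¹ = 1 := ZMod.mul_inv_of_unit _ (hx.pow _)
    have e2 : y ^ (2*k+1) * (y ^ (2*k+1))⁻¹ = 1 := ZMod.mul_inv_of_unit _ (hy.pow _)
    have e3 : x ^ (2*k+2) * (x ^ (2*k+2))⁻¹ = 1 := ZMod.mul_inv_of_unit _ (hx.pow _)
    have hu : IsUnit (x ^ (2*k+1) * y ^ (2*k+1)) := (hx.pow _).mul (hy.pow _)
    refine hu.mul_left_cancel ?_
    push_cast at h1y ⊢
    linear_combination (y ^ (2*k+1)) * e1 + (x ^ (2*k+1)) * e2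
      + (1 + (2*(k : ZMod q)+1) * x ^ (2*k+1) * (p : ZMod q) * (x ^ (2*k+2))⁻¹) * h1y
      + (2*(k : ZMod q)+1)^2 * x ^ (2*k+1) * x ^ (2*k) * (x ^ (2*k+2))⁻¹ * htt
      - (2*(k : ZMod q)+1) * x ^ (2*k) * (p : ZMod q) * e3
  set S := ∑ l ∈ Finset.Ico 1 p, ((l : ZMod q) ^ (2*k+1))⁻¹ with hS
  have hrefl : S = ∑ l ∈ Finset.Ico 1 p, (((p - l : ℕ) : ZMod q) ^ (2*k+1))⁻¹ := by
    rw [hS]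
    refine Finset.sum_nbij' (fun l => p - l) (fun l => p - l) ?_ ?_ ?_ ?_ ?_
    · intro a ha; simp only [Finset.mem_Ico] at *; omega
    · intro a ha; simp only [Finset.mem_Ico] at *; omega
    · intro a ha; simp only [Finset.mem_Ico] at ha; show p - (p - a) = a; omega
    · intro a ha; simp only [Finset.mem_Ico] at ha; show p - (p - a) = a; omega
    · intro a ha; simp only [Finset.mem_Ico] at ha
      rw [show p - (p - a) = a by omega]
  have hsum2 : S + S = -(((2*k+1 : ℕ)) : ZMod q)
      * ((p : ZMod q) * ∑ l ∈ Finset.Ico 1 p, ((l : ZMod q) ^ (2*k+2))⁻¹) := by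
    calc S + S = ∑ l ∈ Finset.Ico 1 p,
          (((l : ZMod q) ^ (2*k+1))⁻¹ + (((p - l : ℕ) : ZMod q) ^ (2*k+1))⁻¹) := by
            rw [Finset.sum_add_distrib, ← hS, ← hrefl]
      _ = ∑ l ∈ Finset.Ico 1 p,
          -(((2*k+1 : ℕ)) : ZMod q) * (p : ZMod q) * ((l : ZMod q) ^ (2*k+2))⁻¹ := by
            refine Finset.sum_congr rfl ?_
            intro l hl; simp only [Finset.mem_Ico] at hl
            exact key l hl.1 hl.2
      _ = _ := by rw [← Finset.mul_sum, mul_assoc]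
  have hmod : (p : ZMod q) * (∑ l ∈ Finset.Ico 1 p, ((l : ZMod q) ^ (2*k+2))⁻¹) = 0 := by
    have hker : ∀ z : ZMod q,
        (ZMod.castHom (dvd_pow_self p two_ne_zero) (ZMod p)) z = 0 → (p : ZMod q) * z = 0 := by
      intro z hz
      have hv : ((z.val : ℕ) : ZMod q) = z := ZMod.natCast_rightInverse z
      have hdvd : p ∣ z.val := by
        rwa [ZMod.castHom_apply, ← ZMod.natCast_val, ZMod.natCast_eq_zero_iff] at hz
      obtain ⟨c, hc⟩ := hdvd
      rw [← hv, hc]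
      push_cast
      linear_combination (c : ZMod q) * htt
    apply hker
    rw [map_sum]
    have hterm : ∀ l ∈ Finset.Ico 1 p,
        (ZMod.castHom (dvd_pow_self p two_ne_zero) (ZMod p)) (((l : ZMod q)) ^ (2*k+2))⁻¹
          = ((l : ZMod p)⁻¹) ^ (2*k+2) := by
      intro l hl; simp only [Finset.mem_Ico] at hl
      have hu : IsUnit ((l : ZMod q) ^ (2*k+2)) := (hunit l hl.1 hl.2).pow _
      have hmapu : (ZMod.castHom (dvd_pow_self p two_ne_zero) (ZMod p)) ((l : ZMod q) ^ (2*k+2))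
          = (l : ZMod p) ^ (2*k+2) := by
        rw [map_pow, map_natCast]
      have h1 : ((l : ZMod p) ^ (2*k+2))
          * (ZMod.castHom (dvd_pow_self p two_ne_zero) (ZMod p)) (((l : ZMod q) ^ (2*k+2))⁻¹)
          = 1 := by
        rw [← hmapu, ← map_mul, ZMod.mul_inv_of_unit _ hu, map_one]
      rw [inv_pow]
      exact eq_inv_of_mul_eq_one_left (by rwa [mul_comm] at h1)
    rw [Finset.sum_congr rfl hterm]
    have h0 : ∑ l ∈ Finset.range p, ((l : ZMod p)⁻¹) ^ (2*k+2)
        = ∑ l ∈ Finset.Ico 1 p, ((l : ZMod p)⁻¹) ^ (2*k+2) := by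
      rw [Finset.range_eq_Ico, Finset.sum_eq_sum_Ico_succ_bot hp.pos]
      simp
    rw [← h0]
    have h1 : ∑ l ∈ Finset.range p, ((l : ZMod p)⁻¹) ^ (2*k+2)
        = ∑ x : ZMod p, (x⁻¹) ^ (2*k+2) := by
      refine Finset.sum_nbij' (fun l => (l : ZMod p)) (fun x => x.val) ?_ ?_ ?_ ?_ ?_
      · intro a _; exact Finset.mem_univ _
      · intro a _; simp [Finset.mem_range, ZMod.val_lt]
      · intro a ha; simp only [Finset.mem_range] at ha; exact ZMod.val_cast_of_lt ha
      · intro a _; exact ZMod.natCast_rightInverse a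
      · intro a _; rfl
    rw [h1]
    have h2 : ∑ x : ZMod p, (x⁻¹) ^ (2*k+2) = ∑ x : ZMod p, x ^ (2*k+2) := by
      refine Finset.sum_nbij' (fun x : ZMod p => x⁻¹) (fun x => x⁻¹) ?_ ?_ ?_ ?_ ?_
      · intro a _; exact Finset.mem_univ _
      · intro a _; exact Finset.mem_univ _
      · intro a _; exact inv_inv a
      · intro a _; exact inv_inv a
      · intro a _; rfl
    rw [h2]
    apply FiniteField.sum_pow_lt_card_sub_one
    rw [ZMod.card]; omega
  have hfin : S + S = 0 := by rw [hsum2, hmod, mul_zero]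
  have h2u : IsUnit (2 : ZMod q) := by
    have h2c : ((2 : ℕ) : ZMod q) = 2 := by norm_num
    rw [← h2c, ZMod.isUnit_iff_coprime, hq]
    exact Nat.Coprime.pow_right 2 ((Nat.coprime_primes Nat.prime_two hp).mpr (by omega))
  have h2s : (2 : ZMod q) * S = 2 * 0 := by rw [two_mul, hfin, mul_zero]
  exact h2u.mul_left_cancel h2s
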